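/- Let F ⊆ P([n]) be union closed with ∅ ∈ F, let τ(X) = ⋃{G ∈ F : G ⊆ X}, and for F ∈ F let T(F) = τ⁻¹({F}). If E, F ∈ F with E ⊆ F, then the map ι : T(F) → T(E) given by ι(X) = X \ (F \ E) is a well-defined order embedding (X ⊆ Y iff ι(X) ⊆ ι(Y)); in particular |T(F)| ≤ |T(E)|. -/

import Mathlib

theorem stmt_9 (n : ℕ) (ℱ : Finset (Finset (Fin n)))
    (hEmpty : ∅ ∈ ℱ) (hUC : ∀ A ∈ ℱ, ∀ B ∈ ℱ, A ∪ B ∈ ℱ)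
    (τ : Finset (Fin n) → Finset (Fin n))
    (hτ : ∀ X, τ X = (ℱ.filter (fun G => G ⊆ X)).sup id)
    (E F : Finset (Fin n)) (hE : E ∈ ℱ) (hF : F ∈ ℱ) (hEF : E ⊆ F) :
    (∀ X, τ X = F → τ (X \ (F \ E)) = E) ∧
    (∀ X Y, τ X = F → τ Y = F → (X ⊆ Y ↔ X \ (F \ E) ⊆ Y \ (F \ E))) ∧
    (Finset.univ.filter (fun X : Finset (Fin n) => τ X = F)).card
      ≤ (Finset.univ.filter (fun X : Finset (Fin n) => τ X = E)).card := by
  have hτsub : ∀ X, τ X ⊆ X := by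
    intro X
    rw [hτ]
    intro a ha
    rcases Finset.mem_sup.mp ha with ⟨G, hG, haG⟩
    exact (Finset.mem_filter.mp hG).2 haG
  have hle : ∀ X, ∀ G ∈ ℱ, G ⊆ X → G ⊆ τ X := by
    intro X G hG hGX
    rw [hτ]
    show G ≤ _
    exact Finset.le_sup (f := id) (Finset.mem_filter.mpr ⟨hG, hGX⟩)
  have hmem : ∀ X, τ X ∈ ℱ := by
    intro X
    rw [hτ]
    refine Finset.sup_induction hEmpty (fun a ha b hb => hUC a ha b hb) ?_
    intro G hG
    exact (Finset.mem_filter.mp hG).1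
  have key : ∀ X, τ X = F → τ (X \ (F \ E)) = E := by
    intro X hX
    have hFX : F ⊆ X := hX ▸ hτsub X
    have hEX' : E ⊆ X \ (F \ E) := by
      intro a ha
      rw [Finset.mem_sdiff, Finset.mem_sdiff]
      exact ⟨hFX (hEF ha), fun h => h.2 ha⟩
    have h1 : E ⊆ τ (X \ (F \ E)) := hle _ E hE hEX'
    have h2 : τ (X \ (F \ E)) ⊆ E := by
      have hsub : τ (X \ (F \ E)) ⊆ X \ (F \ E) := hτsub _
      have hsubF : τ (X \ (F \ E)) ⊆ F := by
        have h4 := hle X _ (hmem (X \ (F \ E))) (hsub.trans Finset.sdiff_subset)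
        rwa [hX] at h4
      intro a ha
      have h3 := Finset.mem_sdiff.mp (hsub ha)
      by_contra haE
      exact h3.2 (Finset.mem_sdiff.mpr ⟨hsubF ha, haE⟩)
    exact Finset.Subset.antisymm h2 h1
  have ord : ∀ X Y, τ X = F → τ Y = F → (X ⊆ Y ↔ X \ (F \ E) ⊆ Y \ (F \ E)) := by
    intro X Y hX hY
    constructor
    · intro h
      exact Finset.sdiff_subset_sdiff h (Finset.Subset.refl _)
    · intro h a ha
      by_cases haFE : a ∈ F \ E
      · exact (hY ▸ hτsub Y) (Finset.mem_sdiff.mp haFE).1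
      · exact (Finset.mem_sdiff.mp (h (Finset.mem_sdiff.mpr ⟨ha, haFE⟩))).1
  refine ⟨key, ord, ?_⟩
  apply Finset.card_le_card_of_injOn (fun X => X \ (F \ E))
  · intro X hX
    rw [Finset.mem_coe, Finset.mem_filter] at hX ⊢
    exact ⟨Finset.mem_univ _, key X hX.2⟩
  · intro X hX Y hY hXY
    simp only [Finset.mem_coe, Finset.mem_filter] at hX hY
    exact Finset.Subset.antisymm
      ((ord X Y hX.2 hY.2).mpr (le_of_eq hXY))
      ((ord Y X hY.2 hX.2).mpr (le_of_eq hXY.symm))
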